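/- arXiv:1411.2800 — 5 statements merged into one kernel-verified Lean document; each statement's English description precedes it below -/
import Mathlib

section
/- Every admissible set of an argumentation framework is contained in some preferred extension. -/
variable {α : Type*}

def conflictFree (att : α → α → Prop) (T : Set α) : Prop :=
  ∀ a ∈ T, ∀ b ∈ T, ¬ att a b

def acceptable (att : α → α → Prop) (T : Set α) (a : α) : Prop :=
  ∀ b, att b a → ∃ c ∈ T, att c b

def admissible (att : α → α → Prop) (T : Set α) : Prop :=
  conflictFree att T ∧ ∀ a ∈ T, acceptable att T a

def complete (att : α → α → Prop) (T : Set α) : Prop :=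
  admissible att T ∧ ∀ a, acceptable att T a → a ∈ T

def preferred (att : α → α → Prop) (T : Set α) : Prop :=
  complete att T ∧ ∀ U, complete att U → T ⊆ U → U = T

/-- Dung's fundamental lemma: adding an acceptable argument preserves admissibility. -/
lemma admissible_insert {att : α → α → Prop} {S : Set α} {a : α}
    (hS : admissible att S) (ha : acceptable att S a) :
    admissible att (insert a S) := by
  obtain ⟨hcf, hacc⟩ := hS
  constructor
  · rintro x (rfl | hx) y (rfl | hy) hatt
    · obtain ⟨c, hc, hcx⟩ := ha _ hatt
      obtain ⟨d, hd, hdc⟩ := ha c hcx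
      exact hcf d hd c hc hdc
    · obtain ⟨c, hc, hca⟩ := hacc y hy _ hatt
      obtain ⟨d, hd, hdc⟩ := ha c hca
      exact hcf d hd c hc hdc
    · obtain ⟨c, hc, hcy⟩ := ha _ hatt
      exact hcf c hc x hx hcy
    · exact hcf x hx y hy hatt
  · rintro x (rfl | hx) b hatt
    · obtain ⟨c, hc, hcb⟩ := ha b hatt
      exact ⟨c, Or.inr hc, hcb⟩
    · obtain ⟨c, hc, hcb⟩ := hacc x hx b hatt
      exact ⟨c, Or.inr hc, hcb⟩

theorem admissible_subset_preferred [Fintype α] (att : α → α → Prop)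
    (T : Set α) (hT : admissible att T) :
    ∃ P : Set α, preferred att P ∧ T ⊆ P := by
  classical
  have hfin : ({S : Set α | admissible att S ∧ T ⊆ S}).Finite :=
    Set.toFinite _
  obtain ⟨P, hPmem, hPmax⟩ :=
    (by
      obtain ⟨P, hP⟩ := Set.Finite.exists_maximal hfin ⟨T, hT, subset_rfl⟩
      exact ⟨P, hP.1, fun U hU hPU => (le_antisymm hPU (hP.2 hU hPU) : id P = id U)⟩ :
      ∃ P ∈ {S : Set α | admissible att S ∧ T ⊆ S}, ∀ U ∈ {S : Set α | admissible att S ∧ T ⊆ S},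
        id P ≤ id U → id P = id U)
  obtain ⟨hPadm, hTP⟩ := hPmem
  have hPcomp : complete att P := by
    refine ⟨hPadm, fun a ha => ?_⟩
    have hins : admissible att (insert a P) := admissible_insert hPadm ha
    have := hPmax (insert a P) ⟨hins, hTP.trans (Set.subset_insert a P)⟩
      (Set.subset_insert a P)
    simp only [id] at this
    rw [this]; exact Set.mem_insert a P
  refine ⟨P, ⟨hPcomp, fun U hU hPU => ?_⟩, hTP⟩
  exact (hPmax U ⟨hU.1, hTP.trans hPU⟩ hPU).symm
end

section
/- If E is an admissible set of Γ = (A, R) and S is a strongly connected component of the attack digraph of Γ, then E ∩ S is an admissible set of the restriction of Γ to S \ (E \ S)⁺, where (E \ S)⁺ denotes the set of arguments attacked by E \ S. -/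
variable {α : Type*}

/-- attack relation of the restriction of Γ to I -/
def restrictAtt (att : α → α → Prop) (I : Set α) (a b : α) : Prop :=
  a ∈ I ∧ b ∈ I ∧ att a b

def isSCC (att : α → α → Prop) (S : Set α) : Prop :=
  ∃ a, S = {b | Relation.ReflTransGen att a b ∧ Relation.ReflTransGen att b a}

/-- X⁺ : set of arguments attacked by X -/
def attacked (att : α → α → Prop) (X : Set α) : Set α :=
  {b | ∃ a ∈ X, att a b}

theorem admissible_inter_scc (att : α → α → Prop) (E S : Set α)
    (hE : admissible att E) (hS : isSCC att S) :
    E ∩ S ⊆ S \ attacked att (E \ S) ∧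
    admissible (restrictAtt att (S \ attacked att (E \ S))) (E ∩ S) := by
  obtain ⟨hcf, hacc⟩ := hE
  have hsub : E ∩ S ⊆ S \ attacked att (E \ S) := by
    rintro a ⟨haE, haS⟩
    refine ⟨haS, ?_⟩
    rintro ⟨c, ⟨hcE, _⟩, hatt⟩
    exact hcf c hcE a haE hatt
  refine ⟨hsub, ?_, ?_⟩
  · intro a ha b hb ⟨_, _, hatt⟩
    exact hcf a ha.1 b hb.1 hatt
  · rintro a ⟨haE, haS⟩ b ⟨hbI, _, hatt⟩
    obtain ⟨c, hcE, hcb⟩ := hacc a haE b hatt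
    have hcS : c ∈ S := by
      by_contra hcS
      exact hbI.2 ⟨c, ⟨hcE, hcS⟩, hcb⟩
    exact ⟨c, ⟨hcE, hcS⟩, hsub ⟨hcE, hcS⟩, hbI, hcb⟩
end

section
/- Let S₁ and S₂ be distinct SCCs of Γ such that neither attacks the other, and such that all attackers from outside are handled: if E₁ is admissible in Γ↓S₁ and E₂ is admissible in Γ↓S₂ and there are no attacks in R between S₁ and S₂, then E₁ ∪ E₂ is admissible in Γ↓(S₁ ∪ S₂). -/
variable {α : Type*}

/-- admissible set of the restricted framework Γ↓I -/
def admissibleIn (att : α → α → Prop) (I E : Set α) : Prop :=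
  E ⊆ I ∧ admissible (restrictAtt att I) E

theorem union_admissible_of_independent_sccs (att : α → α → Prop)
    (S₁ S₂ E₁ E₂ : Set α)
    (hS₁ : isSCC att S₁) (hS₂ : isSCC att S₂) (hne : S₁ ≠ S₂)
    (hnoatt : ∀ a b, att a b → ¬ ((a ∈ S₁ ∧ b ∈ S₂) ∨ (a ∈ S₂ ∧ b ∈ S₁)))
    (h₁ : admissibleIn att S₁ E₁) (h₂ : admissibleIn att S₂ E₂) :
    admissibleIn att (S₁ ∪ S₂) (E₁ ∪ E₂) := by
  obtain ⟨hE₁, hcf₁, hacc₁⟩ := h₁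
  obtain ⟨hE₂, hcf₂, hacc₂⟩ := h₂
  refine ⟨Set.union_subset_union hE₁ hE₂, ?_, ?_⟩
  · rintro a (ha | ha) b (hb | hb) ⟨_, _, hab⟩
    · exact hcf₁ a ha b hb ⟨hE₁ ha, hE₁ hb, hab⟩
    · exact hnoatt a b hab (Or.inl ⟨hE₁ ha, hE₂ hb⟩)
    · exact hnoatt a b hab (Or.inr ⟨hE₂ ha, hE₁ hb⟩)
    · exact hcf₂ a ha b hb ⟨hE₂ ha, hE₂ hb, hab⟩
  · rintro a (ha | ha) b ⟨hbI, haI, hba⟩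
    · rcases hbI with hb | hb
      · obtain ⟨c, hc, hcS, hbS, hcb⟩ := hacc₁ a ha b ⟨hb, hE₁ ha, hba⟩
        exact ⟨c, Or.inl hc, Or.inl hcS, Or.inl hbS, hcb⟩
      · exact absurd (Or.inr ⟨hb, hE₁ ha⟩) (hnoatt b a hba)
    · rcases hbI with hb | hb
      · exact absurd (Or.inl ⟨hb, hE₂ ha⟩) (hnoatt b a hba)
      · obtain ⟨c, hc, hcS, hbS, hcb⟩ := hacc₂ a ha b ⟨hb, hE₂ ha, hba⟩
        exact ⟨c, Or.inr hc, Or.inr hcS, Or.inr hbS, hcb⟩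
end

section
/- If an AF Γ = (A, R) has no attacks between distinct SCCs (i.e., the attack relation never crosses SCC boundaries), then the preferred extensions of Γ are exactly the unions ⋃_S E_S where, for each SCC S, E_S is a preferred extension of Γ↓S. -/
variable {α : Type*}

def completeIn (att : α → α → Prop) (I E : Set α) : Prop :=
  admissibleIn att I E ∧ ∀ a ∈ I, acceptable (restrictAtt att I) E a → a ∈ E

def preferredIn (att : α → α → Prop) (I E : Set α) : Prop :=
  completeIn att I E ∧ ∀ U, completeIn att I U → E ⊆ U → U = E

/-- The SCC (equivalence class) of `a`. -/
def cls (att : α → α → Prop) (a : α) : Set α :=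
  {b | Relation.ReflTransGen att a b ∧ Relation.ReflTransGen att b a}

lemma mem_cls_self (att : α → α → Prop) (a : α) : a ∈ cls att a :=
  ⟨Relation.ReflTransGen.refl, Relation.ReflTransGen.refl⟩

lemma isSCC_cls (att : α → α → Prop) (a : α) : isSCC att (cls att a) := ⟨a, rfl⟩

lemma cls_eq_cls (att : α → α → Prop) {a b : α} (h : b ∈ cls att a) :
    cls att a = cls att b := by
  ext c
  constructor
  · rintro ⟨h1, h2⟩; exact ⟨h.2.trans h1, h2.trans h.1⟩
  · rintro ⟨h1, h2⟩; exact ⟨h.1.trans h1, h2.trans h.2⟩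

lemma scc_eq_cls (att : α → α → Prop) {S : Set α} (hS : isSCC att S) {a : α}
    (ha : a ∈ S) : S = cls att a := by
  obtain ⟨a0, rfl⟩ := hS
  exact cls_eq_cls att ha

lemma acc_iff (att : α → α → Prop)
    (hintra : ∀ a b, att a b →
      Relation.ReflTransGen att a b ∧ Relation.ReflTransGen att b a)
    (T : Set α) (a : α) :
    acceptable att T a ↔ acceptable (restrictAtt att (cls att a)) (T ∩ cls att a) a := by
  constructor
  · intro h b hb
    obtain ⟨c, hcT, hcb⟩ := h b hb.2.2
    have hba : b ∈ cls att a := ⟨(hintra b a hb.2.2).2, (hintra b a hb.2.2).1⟩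
    have hcb' : c ∈ cls att b := ⟨(hintra c b hcb).2, (hintra c b hcb).1⟩
    have hca : c ∈ cls att a := by rw [cls_eq_cls att hba]; exact hcb'
    exact ⟨c, ⟨hcT, hca⟩, hca, hba, hcb⟩
  · intro h b hab
    have hba : b ∈ cls att a := ⟨(hintra b a hab).2, (hintra b a hab).1⟩
    obtain ⟨c, hc, hrc⟩ := h b ⟨hba, mem_cls_self att a, hab⟩
    exact ⟨c, hc.1, hrc.2.2⟩

lemma complete_iff_sccwise (att : α → α → Prop)
    (hintra : ∀ a b, att a b →
      Relation.ReflTransGen att a b ∧ Relation.ReflTransGen att b a)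
    (E : Set α) :
    complete att E ↔ ∀ S : Set α, isSCC att S → completeIn att S (E ∩ S) := by
  constructor
  · rintro ⟨⟨hcf, hacc⟩, hcomp⟩ S hS
    refine ⟨⟨Set.inter_subset_right, ?_, ?_⟩, ?_⟩
    · intro a ha b hb hr
      exact hcf a ha.1 b hb.1 hr.2.2
    · intro a ha
      have hSe := scc_eq_cls att hS ha.2
      rw [hSe]
      exact (acc_iff att hintra E a).mp (hacc a ha.1)
    · intro a haS hacca
      have hSe := scc_eq_cls att hS haS
      rw [hSe] at hacca
      exact ⟨hcomp a ((acc_iff att hintra E a).mpr hacca), haS⟩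
  · intro h
    refine ⟨⟨?_, ?_⟩, ?_⟩
    · intro a ha b hb hab
      have hb' : b ∈ cls att a := hintra a b hab
      exact (h (cls att a) (isSCC_cls att a)).1.2.1 a ⟨ha, mem_cls_self att a⟩
        b ⟨hb, hb'⟩ ⟨mem_cls_self att a, hb', hab⟩
    · intro a ha
      exact (acc_iff att hintra E a).mpr
        ((h (cls att a) (isSCC_cls att a)).1.2.2 a ⟨ha, mem_cls_self att a⟩)
    · intro a hacc
      exact ((h (cls att a) (isSCC_cls att a)).2 a (mem_cls_self att a)
        ((acc_iff att hintra E a).mp hacc)).1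

theorem preferred_iff_sccwise_preferred [Fintype α] (att : α → α → Prop)
    (hintra : ∀ a b, att a b →
      Relation.ReflTransGen att a b ∧ Relation.ReflTransGen att b a)
    (E : Set α) :
    preferred att E ↔ ∀ S : Set α, isSCC att S → preferredIn att S (E ∩ S) := by
  constructor
  · rintro ⟨hcomp, hmax⟩ S hS
    refine ⟨(complete_iff_sccwise att hintra E).mp hcomp S hS, ?_⟩
    intro U hU hsub
    have hUS : U ⊆ S := hU.1.1
    set E' : Set α := (E \ S) ∪ U with hE'
    have hE'S : E' ∩ S = U := by
      ext x
      constructor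
      · rintro ⟨hx1 | hx2, hxS⟩
        · exact absurd hxS hx1.2
        · exact hx2
      · intro hx
        exact ⟨Or.inr hx, hUS hx⟩
    have hdisj : ∀ S' : Set α, isSCC att S' → S' ≠ S → S' ∩ S = ∅ := by
      intro S' hS' hne
      by_contra hcontra
      obtain ⟨x, hx1, hx2⟩ := Set.nonempty_iff_ne_empty.mpr hcontra
      exact hne ((scc_eq_cls att hS' hx1).trans (scc_eq_cls att hS hx2).symm)
    have hE'comp : complete att E' := by
      rw [complete_iff_sccwise att hintra]
      intro S' hS'
      by_cases hcase : S' = S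
      · subst hcase
        rw [hE'S]; exact hU
      · have hd : S' ∩ S = ∅ := hdisj S' hS' hcase
        have : E' ∩ S' = E ∩ S' := by
          ext x
          constructor
          · rintro ⟨hx1 | hx2, hxS'⟩
            · exact ⟨hx1.1, hxS'⟩
            · have hm : x ∈ S' ∩ S := ⟨hxS', hUS hx2⟩
              rw [hd] at hm
              exact hm.elim
          · intro hx
            refine ⟨Or.inl ⟨hx.1, ?_⟩, hx.2⟩
            intro hxS
            have : x ∈ S' ∩ S := ⟨hx.2, hxS⟩
            rw [hd] at this
            exact this
        rw [this]
        exact (complete_iff_sccwise att hintra E).mp hcomp S' hS'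
    have hEsub : E ⊆ E' := by
      intro x hx
      by_cases hxS : x ∈ S
      · exact Or.inr (hsub ⟨hx, hxS⟩)
      · exact Or.inl ⟨hx, hxS⟩
    have := hmax E' hE'comp hEsub
    rw [← hE'S, this]
  · intro h
    refine ⟨(complete_iff_sccwise att hintra E).mpr (fun S hS => (h S hS).1), ?_⟩
    intro U hUc hsub
    have hU : ∀ S : Set α, isSCC att S → U ∩ S = E ∩ S := fun S hS =>
      (h S hS).2 (U ∩ S) ((complete_iff_sccwise att hintra U).mp hUc S hS)
        (Set.inter_subset_inter_left S hsub)
    ext a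
    constructor
    · intro ha
      have : a ∈ U ∩ cls att a := ⟨ha, mem_cls_self att a⟩
      rw [hU (cls att a) (isSCC_cls att a)] at this
      exact this.1
    · exact fun ha => hsub ha
end

section
/- If an AF is acyclic (its attack digraph has no directed cycles), then it has a unique complete extension, which is therefore simultaneously the grounded and the unique preferred extension. -/
variable {α : Type*}

theorem acyclic_unique_complete [Fintype α] (att : α → α → Prop)
    (hacyclic : ∀ a : α, ¬ Relation.TransGen att a a) :
    (∃! T : Set α, complete att T) ∧
    ∀ T : Set α, complete att T →
      preferred att T ∧ ∀ U, complete att U → T ⊆ U := by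
  classical
  have hirr : IsIrrefl α (Relation.TransGen att) := ⟨hacyclic⟩
  have htr : IsTrans α (Relation.TransGen att) := ⟨fun _ _ _ => Relation.TransGen.trans⟩
  have wfT : WellFounded (Relation.TransGen att) :=
    Finite.wellFounded_of_trans_of_irrefl _
  have wf : WellFounded att :=
    Subrelation.wf (fun h => Relation.TransGen.single h) wfT
  -- any complete extension is contained in any other
  have hsub : ∀ T U : Set α, complete att T → complete att U → T ⊆ U := by
    intro T U hT hU a
    induction a using wfT.induction with
    | _ a ih =>
      intro haT
      apply hU.2
      intro b hb
      obtain ⟨c, hcT, hcb⟩ := hT.1.2 a haT b hb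
      exact ⟨c, ih c (Relation.TransGen.head hcb (Relation.TransGen.single hb)) hcT, hcb⟩
  -- construct the grounded extension by well-founded recursion
  let inG : α → Prop := wf.fix (fun a ih => ∀ b, ∀ h : att b a, ¬ ih b h)
  have hGdef : ∀ a, inG a ↔ ∀ b, att b a → ¬ inG b := by
    intro a
    have h := wf.fix_eq (fun a ih => ∀ b, ∀ h : att b a, ¬ ih b h) a
    simp only [inG]
    rw [h]
  have hGcomp : complete att {a | inG a} := by
    refine ⟨⟨?_, ?_⟩, ?_⟩
    · intro a ha b hb hab
      exact ((hGdef b).1 hb) a hab ha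
    · intro a ha b hb
      have hbG : ¬ inG b := fun hbg => ((hGdef a).1 ha) b hb hbg
      have := (hGdef b).not.1 hbG
      push_neg at this
      obtain ⟨c, hcb, hcG⟩ := this
      exact ⟨c, hcG, hcb⟩
    · intro a ha
      refine (hGdef a).2 ?_
      intro b hb hbG
      obtain ⟨c, hcG, hcb⟩ := ha b hb
      exact ((hGdef b).1 hbG) c hcb hcG
  have heq : ∀ T, complete att T → T = {a | inG a} := fun T hT =>
    Set.Subset.antisymm (hsub _ _ hT hGcomp) (hsub _ _ hGcomp hT)
  constructor
  · exact ⟨{a | inG a}, hGcomp, heq⟩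
  · intro T hT
    refine ⟨⟨hT, fun U hU _ => by rw [heq U hU, heq T hT]⟩, fun U hU => hsub _ _ hT hU⟩
end
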